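/- Let E be a real normed space, let x₁,…,xₙ ∈ E and x₁′,…,xₙ′ ∈ E, let p ≥ 1, let λ₁ ≥ λ₂ ≥ ⋯ ≥ λₙ ≥ 0, and let T = max_{i=1,…,n} ‖xᵢ − xᵢ′‖. For an arrangement 𝕂 = (H₁,…,H_p) of p hyperplanes H_j = {y ∈ E : f_j(y) + α_j = 0} with f_j nonzero continuous linear functionals and α_j ∈ ℝ, define the residual of a point x as ε_x(𝕂) = min_{j=1,…,p} inf{‖x − y‖ : y ∈ H_j}, and define G(𝕂) = OM_λ(ε_{x₁}(𝕂),…,ε_{xₙ}(𝕂)) and G′(𝕂) = OM_λ(ε_{x₁′}(𝕂),…,ε_{xₙ′}(𝕂)). If ℍ minimizes G over all arrangements of p hyperplanes and ℍ′ minimizes G′ over all arrangements of p hyperplanes, then |G′(ℍ′) − G(ℍ)| ≤ 2 · OM_λ(T,…,T) = 2T · Σᵢ₌₁ⁿ λᵢ. -/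

import Mathlib

/-- The ordered median function: `OM lam e = ∑ i, lam i * e_(i)`, where
`e_(1) ≥ ⋯ ≥ e_(n)` is the decreasing rearrangement of `e`. -/
noncomputable def OM {n : ℕ} (lam e : Fin n → ℝ) : ℝ :=
  ∑ i : Fin n, lam i * e (Tuple.sort e i.rev)

/-- The residual of a point `x` with respect to an arrangement `K` of `p` hyperplanes
`H_j = {y : f_j y + α_j = 0}`: the least distance from `x` to any of the hyperplanes. -/
noncomputable def resid {E : Type*} [NormedAddCommGroup E] [NormedSpace ℝ E] {p : ℕ}
    (K : Fin p → (E →L[ℝ] ℝ) × ℝ) (x : E) : ℝ :=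
  ⨅ j : Fin p, Metric.infDist x {y : E | (K j).1 y + (K j).2 = 0}


private lemma monovary_aux {n : ℕ} {lam f : Fin n → ℝ} (hmono : Antitone lam) :
    Monovary lam (fun i => f (Tuple.sort f i.rev)) := by
  intro i j hij
  have hm : Monotone (f ∘ Tuple.sort f) := Tuple.monotone_sort f
  have hij' : (f ∘ Tuple.sort f) i.rev < (f ∘ Tuple.sort f) j.rev := hij
  have : i.rev < j.rev := by
    by_contra h
    exact absurd (hm (not_lt.1 h)) (not_le.2 hij')
  exact hmono (le_of_lt (Fin.rev_lt_rev.1 this))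

private lemma sum_perm_le_OM {n : ℕ} (lam f : Fin n → ℝ) (hmono : Antitone lam)
    (σ : Equiv.Perm (Fin n)) :
    ∑ i : Fin n, lam i * f (σ i) ≤ OM lam f := by
  set g : Fin n → ℝ := fun i => f (Tuple.sort f i.rev) with hg
  have hfg : Monovary lam g := monovary_aux hmono
  set τ : Equiv.Perm (Fin n) :=
    σ.trans (((Tuple.sort f)⁻¹ : Equiv.Perm (Fin n)).trans Fin.revPerm) with hτ
  have h := hfg.sum_smul_comp_perm_le_sum_smul (σ := τ)
  simp only [smul_eq_mul] at h
  have hgt : ∀ i, g (τ i) = f (σ i) := by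
    intro i
    simp [hg, hτ, Equiv.trans_apply, Fin.revPerm_apply, Fin.rev_rev]
  calc ∑ i : Fin n, lam i * f (σ i) = ∑ i : Fin n, lam i * g (τ i) := by
        simp_rw [hgt]
    _ ≤ ∑ i : Fin n, lam i * g i := h
    _ = OM lam f := rfl

private lemma OM_le_add {n : ℕ} (lam e f : Fin n → ℝ) (hmono : Antitone lam)
    (hpos : ∀ i, 0 ≤ lam i) (c : ℝ) (h : ∀ i, e i ≤ f i + c) :
    OM lam e ≤ OM lam f + c * ∑ i : Fin n, lam i := by
  set σ : Equiv.Perm (Fin n) := Fin.revPerm.trans (Tuple.sort e) with hσ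
  calc OM lam e = ∑ i : Fin n, lam i * e (σ i) := rfl
    _ ≤ ∑ i : Fin n, lam i * (f (σ i) + c) := by
        apply Finset.sum_le_sum
        intro i _
        exact mul_le_mul_of_nonneg_left (h _) (hpos i)
    _ = (∑ i : Fin n, lam i * f (σ i)) + c * ∑ i : Fin n, lam i := by
        simp_rw [mul_add, Finset.sum_add_distrib, Finset.mul_sum, mul_comm]
    _ ≤ OM lam f + c * ∑ i : Fin n, lam i := by
        gcongr
        exact sum_perm_le_OM lam f hmono σ

private lemma resid_lip {E : Type*} [NormedAddCommGroup E] [NormedSpace ℝ E] {p : ℕ}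
    (hp : 1 ≤ p) (K : Fin p → (E →L[ℝ] ℝ) × ℝ) (a b : E) :
    resid K a ≤ resid K b + ‖a - b‖ := by
  have : Nonempty (Fin p) := ⟨⟨0, hp⟩⟩
  have hbdd : BddBelow (Set.range fun j : Fin p =>
      Metric.infDist a {y : E | (K j).1 y + (K j).2 = 0}) :=
    (Set.finite_range _).bddBelow
  obtain ⟨j0, hj0⟩ := Finite.exists_min
    (fun j : Fin p => Metric.infDist b {y : E | (K j).1 y + (K j).2 = 0})
  have hb : resid K b = Metric.infDist b {y : E | (K j0).1 y + (K j0).2 = 0} :=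
    le_antisymm (ciInf_le ((Set.finite_range _).bddBelow) j0) (le_ciInf hj0)
  have h1 : resid K a ≤ Metric.infDist a {y : E | (K j0).1 y + (K j0).2 = 0} :=
    ciInf_le hbdd j0
  have h2 : Metric.infDist a {y : E | (K j0).1 y + (K j0).2 = 0} ≤
      Metric.infDist b {y : E | (K j0).1 y + (K j0).2 = 0} + dist a b :=
    Metric.infDist_le_infDist_add_dist
  rw [hb]
  calc resid K a ≤ _ := h1
    _ ≤ _ := h2
    _ = _ := by rw [dist_eq_norm]

/-- Aggregation error bound: if the aggregated points `xᵢ′` satisfy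
`T = maxᵢ ‖xᵢ − xᵢ′‖`, `ℍ` is an optimal arrangement of `p` hyperplanes for the points
`xᵢ` and `ℍ′` is an optimal arrangement for the points `xᵢ′` (w.r.t. the ordered median
of the residuals), then the optimal values differ by at most
`2·OM_λ(T,…,T) = 2T·∑ᵢ λᵢ`. -/
theorem stmt14 {E : Type*} [NormedAddCommGroup E] [NormedSpace ℝ E]
    {n p : ℕ} (hn : 1 ≤ n) (hp : 1 ≤ p)
    (x x' : Fin n → E) (lam : Fin n → ℝ)
    (hmono : Antitone lam) (hpos : ∀ i, 0 ≤ lam i)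
    (T : ℝ) (hT : IsGreatest (Set.range fun i => ‖x i - x' i‖) T)
    (H H' : Fin p → (E →L[ℝ] ℝ) × ℝ)
    (hH0 : ∀ j, (H j).1 ≠ 0) (hH'0 : ∀ j, (H' j).1 ≠ 0)
    (hHopt : ∀ K : Fin p → (E →L[ℝ] ℝ) × ℝ, (∀ j, (K j).1 ≠ 0) →
      OM lam (fun i => resid H (x i)) ≤ OM lam (fun i => resid K (x i)))
    (hH'opt : ∀ K : Fin p → (E →L[ℝ] ℝ) × ℝ, (∀ j, (K j).1 ≠ 0) →
      OM lam (fun i => resid H' (x' i)) ≤ OM lam (fun i => resid K (x' i))) :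
    |OM lam (fun i => resid H' (x' i)) - OM lam (fun i => resid H (x i))| ≤
        2 * OM lam (fun _ => T) ∧
    OM lam (fun _ => T) = T * ∑ i : Fin n, lam i := by
  have hT0 : 0 ≤ T := by
    obtain ⟨i, hi⟩ := hT.1
    rw [← hi]; exact norm_nonneg _
  have hconst : OM lam (fun _ => T) = T * ∑ i : Fin n, lam i := by
    unfold OM
    rw [Finset.mul_sum]
    exact Finset.sum_congr rfl fun i _ => mul_comm _ _
  refine ⟨?_, hconst⟩
  set A := OM lam (fun i => resid H (x i)) with hA
  set B := OM lam (fun i => resid H' (x' i)) with hB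
  have hTd : ∀ i : Fin n, ‖x i - x' i‖ ≤ T := fun i => hT.2 ⟨i, rfl⟩
  have hsum0 : 0 ≤ ∑ i : Fin n, lam i := Finset.sum_nonneg fun i _ => hpos i
  have key1 : B ≤ A + T * ∑ i : Fin n, lam i := by
    have s1 : B ≤ OM lam (fun i => resid H (x' i)) := hH'opt H hH0
    have s2 : OM lam (fun i => resid H (x' i)) ≤ A + T * ∑ i : Fin n, lam i := by
      apply OM_le_add _ _ _ hmono hpos
      intro i
      calc resid H (x' i) ≤ resid H (x i) + ‖x' i - x i‖ := resid_lip hp H _ _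
        _ ≤ resid H (x i) + T := by
            have : ‖x' i - x i‖ = ‖x i - x' i‖ := norm_sub_rev _ _
            rw [this]; exact add_le_add_right (hTd i) _
    exact s1.trans s2
  have key2 : A ≤ B + T * ∑ i : Fin n, lam i := by
    have s1 : A ≤ OM lam (fun i => resid H' (x i)) := hHopt H' hH'0
    have s2 : OM lam (fun i => resid H' (x i)) ≤ B + T * ∑ i : Fin n, lam i := by
      apply OM_le_add _ _ _ hmono hpos
      intro i
      calc resid H' (x i) ≤ resid H' (x' i) + ‖x i - x' i‖ := resid_lip hp H' _ _
        _ ≤ resid H' (x' i) + T := add_le_add_right (hTd i) _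
    exact s1.trans s2
  rw [hconst]
  rw [abs_sub_le_iff]
  constructor
  · nlinarith
  · nlinarith
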